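/- Suppose T : H → H is nonexpansive with unique fixed point x̄, and Id − T is locally strongly monotone around x̄: there exist α, δ > 0 with ⟨x − x̄, x − Tx⟩ ≥ α‖x − x̄‖² for all x ∈ B(x̄;δ). If the solution x of x' = Tx − x enters B(x̄;δ) at time t_0, then ‖x(t) − x̄‖ ≤ ‖x(t_0) − x̄‖ e^{−α(t−t_0)} for t ≥ t_0; moreover every such solution converges strongly to x̄ as t → ∞. -/

import Mathlib

open Filter Topology
open scoped RealInnerProductSpace

theorem stmt16 {H : Type*} [NormedAddCommGroup H] [InnerProductSpace ℝ H]
    (T : H → H) (hT : LipschitzWith 1 T)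
    (xbar : H) (hfix : T xbar = xbar) (huniq : ∀ y, T y = y → y = xbar)
    (α δ : ℝ) (hα : 0 < α) (hδ : 0 < δ)
    (hmono : ∀ y ∈ Metric.closedBall xbar δ,
      α * ‖y - xbar‖ ^ 2 ≤ ⟪y - xbar, y - T y⟫)
    (x : ℝ → H)
    (hx : ∀ t ∈ Set.Ici (0:ℝ), HasDerivWithinAt x (T (x t) - x t) (Set.Ici 0) t)
    (t0 : ℝ) (ht0 : 0 ≤ t0) (henter : x t0 ∈ Metric.closedBall xbar δ) :
    (∀ t, t0 ≤ t → ‖x t - xbar‖ ≤ ‖x t0 - xbar‖ * Real.exp (-α * (t - t0))) ∧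
    Tendsto x atTop (𝓝 xbar) := by
  have hxcont : ContinuousOn x (Set.Ici 0) := fun t ht => (hx t ht).continuousWithinAt
  set f : ℝ → ℝ := fun t => ‖x t - xbar‖ ^ 2 with hf_def
  have hfcont : ContinuousOn f (Set.Ici 0) :=
    ((hxcont.sub continuousOn_const).norm.pow 2)
  have hfderiv : ∀ t, 0 ≤ t →
      HasDerivWithinAt f (2 * ⟪x t - xbar, T (x t) - x t⟫) (Set.Ici t) t := by
    intro t ht
    have hd : HasDerivWithinAt (fun u => x u - xbar) (T (x t) - x t) (Set.Ici t) t :=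
      ((hx t ht).mono (Set.Ici_subset_Ici.2 ht)).sub_const xbar
    have h2 := HasDerivWithinAt.inner ℝ hd hd
    have hfeq : f = fun u => ⟪x u - xbar, x u - xbar⟫ := by
      funext u; rw [real_inner_self_eq_norm_sq]
    rw [hfeq]
    convert h2 using 1
    · rfl
    · rfl
    rw [real_inner_comm (T (x t) - x t) (x t - xbar)]
    ring
  have hnormle : ∀ u, f u ≤ δ ^ 2 → ‖x u - xbar‖ ≤ δ :=
    fun u h => le_of_pow_le_pow_left₀ two_ne_zero hδ.le h
  have hball_mem : ∀ u, ‖x u - xbar‖ ≤ δ → x u ∈ Metric.closedBall xbar δ := by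
    intro u h; rw [Metric.mem_closedBall, dist_eq_norm]; exact h
  -- Grönwall step on an interval where x stays in the ball
  have key : ∀ a b : ℝ, 0 ≤ a → (∀ u ∈ Set.Icc a b, ‖x u - xbar‖ ≤ δ) →
      ∀ t ∈ Set.Icc a b, f t ≤ f a * Real.exp (-(2*α) * (t - a)) := by
    intro a b ha hball t htab
    have hcont : ContinuousOn f (Set.Icc a b) :=
      hfcont.mono (fun u hu => le_trans ha hu.1)
    have h := le_gronwallBound_of_liminf_deriv_right_le (f := f)
      (f' := fun u => 2 * ⟪x u - xbar, T (x u) - x u⟫) (δ := f a) (K := -(2*α)) (ε := 0)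
      hcont
      (fun u hu r hr => (hfderiv u (le_trans ha hu.1)).liminf_right_slope_le hr)
      le_rfl
      (fun u hu => by
        have hb : x u ∈ Metric.closedBall xbar δ :=
          hball_mem u (hball u ⟨hu.1, hu.2.le⟩)
        have hm := hmono (x u) hb
        have hrw : ⟪x u - xbar, T (x u) - x u⟫ = -⟪x u - xbar, x u - T (x u)⟫ := by
          rw [show T (x u) - x u = -(x u - T (x u)) from (neg_sub _ _).symm, inner_neg_right]
        show 2 * ⟪x u - xbar, T (x u) - x u⟫ ≤ -(2*α) * f u + 0
        rw [hrw]
        simp only [hf_def, add_zero]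
        nlinarith [hm])
      t htab
    rwa [gronwallBound_ε0] at h
  have hft0 : f t0 ≤ δ ^ 2 := by
    have : ‖x t0 - xbar‖ ≤ δ := by rwa [Metric.mem_closedBall, dist_eq_norm] at henter
    exact pow_le_pow_left₀ (norm_nonneg _) this 2
  -- main exponential estimate at the level of f
  have main : ∀ t, t0 ≤ t → f t ≤ f t0 * Real.exp (-(2*α) * (t - t0)) := by
    intro b hb
    set s : Set ℝ := {t | f t ≤ f t0 * Real.exp (-(2*α) * (t - t0))} with hs_def
    have hsub : Set.Icc t0 b ⊆ s := by
      apply IsClosed.Icc_subset_of_forall_mem_nhdsWithin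
      · have heq : s ∩ Set.Icc t0 b =
            Set.Icc t0 b ∩ (fun t => f t - f t0 * Real.exp (-(2*α) * (t - t0))) ⁻¹' Set.Iic 0 := by
          ext u
          simp only [hs_def, Set.mem_inter_iff, Set.mem_setOf_eq, Set.mem_preimage,
            Set.mem_Iic, sub_nonpos, and_comm]
        rw [heq]
        apply ContinuousOn.preimage_isClosed_of_isClosed _ isClosed_Icc isClosed_Iic
        apply ContinuousOn.sub
        · exact hfcont.mono (fun u hu => le_trans ht0 hu.1)
        · exact (continuous_const.mul (Real.continuous_exp.comp
            (continuous_const.mul (continuous_id.sub continuous_const)))).continuousOn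
      · show f t0 ≤ f t0 * Real.exp (-(2*α) * (t0 - t0))
        simp
      · rintro t ⟨hts, ht0t, htb⟩
        have htnn : (0:ℝ) ≤ t := le_trans ht0 ht0t
        have hexp1 : Real.exp (-(2*α) * (t - t0)) ≤ 1 := by
          rw [Real.exp_le_one_iff]
          nlinarith
        have hft : f t ≤ δ ^ 2 := by
          calc f t ≤ f t0 * Real.exp (-(2*α) * (t - t0)) := hts
            _ ≤ δ ^ 2 * 1 := by
                apply mul_le_mul hft0 hexp1 (Real.exp_pos _).le (by positivity)
            _ = δ ^ 2 := mul_one _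
        -- find η > t such that f ≤ δ² on [t, η]
        obtain ⟨η, hη, hballIcc⟩ : ∃ η, t < η ∧ ∀ u ∈ Set.Icc t η, f u ≤ δ ^ 2 := by
          by_cases hlt : f t < δ ^ 2
          · have hcw : ContinuousWithinAt f (Set.Ici t) t :=
              (hfcont t htnn).mono (Set.Ici_subset_Ici.2 htnn)
            have hmem : f ⁻¹' Set.Iio (δ ^ 2) ∈ 𝓝[Set.Ici t] t :=
              hcw (Iio_mem_nhds hlt)
            rcases mem_nhdsGE_iff_exists_Icc_subset.1 hmem with ⟨η, hη, hsubset⟩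
            exact ⟨η, hη, fun u hu => (hsubset hu).le⟩
          · have hfteq : f t = δ ^ 2 := le_antisymm hft (not_lt.1 hlt)
            have hder := hfderiv t htnn
            have hneg : 2 * ⟪x t - xbar, T (x t) - x t⟫ < 0 := by
              have hm := hmono (x t) (hball_mem t (hnormle t hft))
              have hrw : ⟪x t - xbar, T (x t) - x t⟫ = -⟪x t - xbar, x t - T (x t)⟫ := by
                rw [show T (x t) - x t = -(x t - T (x t)) from (neg_sub _ _).symm,
                  inner_neg_right]
              rw [hrw]
              have hfteq' : ‖x t - xbar‖ ^ 2 = δ ^ 2 := hfteq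
              nlinarith [mul_pos hα (pow_pos hδ 2)]
            have hslope : Tendsto (slope f t) (𝓝[>] t) (𝓝 (2 * ⟪x t - xbar, T (x t) - x t⟫)) := by
              have h := hasDerivWithinAt_iff_tendsto_slope.1 hder
              rwa [Set.Ici_sdiff_left] at h
            have hev : ∀ᶠ z in 𝓝[>] t, slope f t z < 0 :=
              hslope (Iio_mem_nhds hneg)
            have hev2 : ∀ᶠ z in 𝓝[>] t, f z ≤ δ ^ 2 := by
              filter_upwards [hev, self_mem_nhdsWithin] with z hz hz'
              rw [Set.mem_Ioi] at hz'
              rw [slope_def_field] at hz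
              have : f z - f t < 0 := by
                by_contra hcon
                push_neg at hcon
                have := div_nonneg hcon (by linarith : (0:ℝ) ≤ z - t)
                linarith
              linarith [hfteq ▸ this]
            rcases mem_nhdsGT_iff_exists_Ioc_subset.1 hev2 with ⟨η, hη, hsubset⟩
            refine ⟨η, hη, fun u hu => ?_⟩
            rcases eq_or_lt_of_le hu.1 with h | h
            · rw [← h]; exact hfteq.le
            · exact hsubset ⟨h, hu.2⟩
        -- apply the Grönwall step on [t, η]
        have hkey := key t η htnn (fun u hu => hnormle u (hballIcc u hu))
        have hIoc : Set.Ioc t η ∈ 𝓝[>] t := Ioc_mem_nhdsGT hη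
        filter_upwards [hIoc] with u hu
        have h1 : f u ≤ f t * Real.exp (-(2*α) * (u - t)) := hkey u ⟨hu.1.le, hu.2⟩
        show f u ≤ f t0 * Real.exp (-(2*α) * (u - t0))
        calc f u ≤ (f t0 * Real.exp (-(2*α) * (t - t0))) * Real.exp (-(2*α) * (u - t)) := by
              apply h1.trans
              exact mul_le_mul_of_nonneg_right hts (Real.exp_pos _).le
          _ = f t0 * Real.exp (-(2*α) * (u - t0)) := by
              rw [mul_assoc, ← Real.exp_add]
              congr 2
              ring
    exact hsub ⟨hb, le_rfl⟩
  -- conclusion 1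
  have conc1 : ∀ t, t0 ≤ t → ‖x t - xbar‖ ≤ ‖x t0 - xbar‖ * Real.exp (-α * (t - t0)) := by
    intro t ht
    have h := main t ht
    apply le_of_pow_le_pow_left₀ two_ne_zero (by positivity)
    calc ‖x t - xbar‖ ^ 2 = f t := rfl
      _ ≤ f t0 * Real.exp (-(2*α) * (t - t0)) := h
      _ = (‖x t0 - xbar‖ * Real.exp (-α * (t - t0))) ^ 2 := by
          rw [mul_pow, sq (Real.exp _), ← Real.exp_add]
          simp only [hf_def]
          congr 2
          ring
  refine ⟨conc1, ?_⟩
  -- convergence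
  have hup : Tendsto (fun t => ‖x t0 - xbar‖ * Real.exp (-α * (t - t0))) atTop (𝓝 0) := by
    have h1 : Tendsto (fun t : ℝ => -α * (t - t0)) atTop atBot := by
      apply Tendsto.const_mul_atTop_of_neg (by linarith : -α < 0)
      exact tendsto_atTop_add_const_right _ _ tendsto_id
    have h2 : Tendsto (fun t : ℝ => Real.exp (-α * (t - t0))) atTop (𝓝 0) :=
      Real.tendsto_exp_atBot.comp h1
    have := h2.const_mul ‖x t0 - xbar‖
    simpa using this
  have hnorm : Tendsto (fun t => ‖x t - xbar‖) atTop (𝓝 0) := by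
    apply squeeze_zero' (Eventually.of_forall fun t => norm_nonneg _) _ hup
    filter_upwards [eventually_ge_atTop t0] with t ht
    exact conc1 t ht
  exact tendsto_iff_norm_sub_tendsto_zero.2 hnorm
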